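/- Divergence-free fields in the reduced Adini 1-form space are curls: Let curl f := (−∂_y f, ∂_x f) for f ∈ ℝ[x,y], let A := {f ∈ ℝ[x,y] : deg f ≤ 3} + span{x³y, xy³}, and let Ã := {(p,q) ∈ ℝ[x,y]² : deg p ≤ 1 and deg q ≤ 1} + span{curl(x³), curl(y³), curl(x²y), curl(xy²), curl(x³y), curl(xy³)}. Then {u ∈ Ã : ∂_x u₁ + ∂_y u₂ = 0} = {curl φ : φ ∈ A}. -/

import Mathlib

open MvPolynomial

noncomputable section

/-- Polynomials in two variables `x, y` over `ℝ`. -/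
abbrev M2 : Type := MvPolynomial (Fin 2) ℝ

def x : M2 := X 0
def y : M2 := X 1

/-- The 2D curl of a scalar polynomial: `curl f = (−∂_y f, ∂_x f)`. -/
def curl2 (f : M2) : Fin 2 → M2 := ![-(pderiv 1 f), pderiv 0 f]

/-- The divergence of a polynomial vector field. -/
def div2 (u : Fin 2 → M2) : M2 := pderiv 0 (u 0) + pderiv 1 (u 1)

/-- The 2D Adini 0-form shape space `A := P₃ + span{x³y, xy³}`. -/
def A0 : Submodule ℝ M2 :=
  restrictTotalDegree (Fin 2) ℝ 3 ⊔ Submodule.span ℝ {x ^ 3 * y, x * y ^ 3}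

/-- The reduced Adini 1-form shape space
`Ã := [P₁]² + span{curl(x³), curl(y³), curl(x²y), curl(xy²), curl(x³y), curl(xy³)}`. -/
def Atilde : Submodule ℝ (Fin 2 → M2) :=
  (Submodule.pi Set.univ fun _ => restrictTotalDegree (Fin 2) ℝ 1) ⊔
    Submodule.span ℝ
      {curl2 (x ^ 3), curl2 (y ^ 3), curl2 (x ^ 2 * y), curl2 (x * y ^ 2),
        curl2 (x ^ 3 * y), curl2 (x * y ^ 3)}

/-! ### Auxiliary lemmas -/

lemma pderiv_comm' (i j : Fin 2) (f : M2) :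
    pderiv i (pderiv j f) = pderiv j (pderiv i f) := by
  induction f using MvPolynomial.induction_on with
  | C a => simp
  | add p q hp hq => simp [hp, hq]
  | mul_X p k hp =>
    simp only [pderiv_mul, map_add, pderiv_X, Pi.single_apply, hp]
    by_cases h0 : k = i <;> by_cases h1 : k = j <;>
      simp [h0, h1, apply_ite (pderiv i), apply_ite (pderiv j)] <;> ring

/-- `curl2` as a linear map. -/
def curlL : M2 →ₗ[ℝ] (Fin 2 → M2) where
  toFun := curl2
  map_add' f g := by
    funext i; fin_cases i <;> simp [curl2] <;> ring
  map_smul' c f := by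
    funext i; fin_cases i <;> simp [curl2]

@[simp] lemma curlL_apply (f : M2) : curlL f = curl2 f := rfl

/-- `div2` as a linear map. -/
def divL : (Fin 2 → M2) →ₗ[ℝ] M2 where
  toFun := div2
  map_add' u v := by simp [div2]; ring_nf
  map_smul' c u := by simp [div2]

@[simp] lemma divL_apply (u : Fin 2 → M2) : divL u = div2 u := rfl

lemma div2_curl2 (f : M2) : div2 (curl2 f) = 0 := by
  simp [div2, curl2, pderiv_comm' 0 1 f]

lemma monomial_xy (m : Fin 2 →₀ ℕ) (c : ℝ) :
    (monomial m c : M2) = C c * x ^ (m 0) * y ^ (m 1) := by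
  rw [monomial_eq]
  rw [Finsupp.prod_fintype _ _ (fun i => pow_zero _)]
  rw [Fin.prod_univ_two]
  simp only [x, y]
  ring

lemma support_sum_eq (m : Fin 2 →₀ ℕ) : ∑ i ∈ m.support, m i = m 0 + m 1 := by
  rw [Finset.sum_subset (Finset.subset_univ m.support)
    (fun i _ hi => Finsupp.notMem_support_iff.mp hi), Fin.sum_univ_two]

lemma fin2_finsupp_eq {m n : Fin 2 →₀ ℕ} (h0 : m 0 = n 0) (h1 : m 1 = n 1) : m = n :=
  Finsupp.ext fun i => by fin_cases i <;> assumption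

/-- A polynomial of total degree at most one is an affine combination of `x` and `y`. -/
lemma deg1_decomp (p : M2) (hp : p.totalDegree ≤ 1) :
    p = C (coeff 0 p) + C (coeff (Finsupp.single 0 1) p) * x +
      C (coeff (Finsupp.single 1 1) p) * y := by
  have hz : ∀ m : Fin 2 →₀ ℕ, 2 ≤ m 0 + m 1 → coeff m p = 0 := by
    intro m hm
    refine coeff_eq_zero_of_totalDegree_lt ?_
    rw [support_sum_eq]; omega
  apply MvPolynomial.ext
  intro m
  simp only [coeff_add, coeff_C, coeff_C_mul, x, y, coeff_X']
  rcases Nat.lt_or_ge (m 0 + m 1) 2 with h | h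
  · have h0 : m 0 ≤ 1 := by omega
    have h1 : m 1 ≤ 1 := by omega
    interval_cases hm0 : (m 0) <;> interval_cases hm1 : (m 1)
    · have : (0 : Fin 2 →₀ ℕ) = m := (fin2_finsupp_eq (by simp [hm0]) (by simp [hm1])).symm
      simp [← this]
    · have : Finsupp.single (1 : Fin 2) 1 = m :=
        fin2_finsupp_eq (by simp [hm0]) (by simp [hm1])
      rw [← this]
      have e0 : ¬ ((0 : Fin 2 →₀ ℕ) = Finsupp.single (1 : Fin 2) 1) := by
        intro h; have := DFunLike.congr_fun h 1; simp at this
      have e1 : ¬ (Finsupp.single (0 : Fin 2) 1 = Finsupp.single (1 : Fin 2) 1) := by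
        intro h; have := DFunLike.congr_fun h 1; simp at this
      simp [e0, e1]
    · have : Finsupp.single (0 : Fin 2) 1 = m :=
        fin2_finsupp_eq (by simp [hm0]) (by simp [hm1])
      rw [← this]
      have e0 : ¬ ((0 : Fin 2 →₀ ℕ) = Finsupp.single (0 : Fin 2) 1) := by
        intro h; have := DFunLike.congr_fun h 0; simp at this
      have e1 : ¬ (Finsupp.single (1 : Fin 2) 1 = Finsupp.single (0 : Fin 2) 1) := by
        intro h; have := DFunLike.congr_fun h 0; simp at this
      simp [e0, e1]
    · omega
  · rw [hz m h]
    have e0 : ¬ ((0 : Fin 2 →₀ ℕ) = m) := by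
      intro hh; rw [← hh] at h; simp at h
    have e1 : ¬ (Finsupp.single (0 : Fin 2) 1 = m) := by
      intro hh; rw [← hh] at h; simp at h
    have e2 : ¬ (Finsupp.single (1 : Fin 2) 1 = m) := by
      intro hh; rw [← hh] at h; simp at h
    simp [e0, e1, e2]

lemma memP1 (p : M2) (h : p.totalDegree ≤ 1) : p ∈ restrictTotalDegree (Fin 2) ℝ 1 :=
  (mem_restrictTotalDegree _ _ _).mpr h

lemma tdeg_two_mul_X (i : Fin 2) : ((2 : M2) * X i).totalDegree ≤ 1 := by
  refine le_trans (totalDegree_mul _ _) ?_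
  have h2 : ((2 : M2)).totalDegree = 0 := by
    rw [show (2 : M2) = C 2 from (map_ofNat C 2).symm]; exact totalDegree_C _
  simp [h2, totalDegree_X]

lemma curl_low_mem (f : M2) (h0 : (pderiv 0 f).totalDegree ≤ 1)
    (h1 : (pderiv 1 f).totalDegree ≤ 1) : curl2 f ∈ Atilde := by
  apply Submodule.mem_sup_left
  rw [Submodule.mem_pi]
  intro i _
  fin_cases i <;> apply memP1 <;>
    simp [curl2, totalDegree_neg, h0, h1]

lemma curl_gen_mem (f : M2)
    (hf : f ∈ ({x ^ 3, y ^ 3, x ^ 2 * y, x * y ^ 2, x ^ 3 * y, x * y ^ 3} : Set M2)) :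
    curl2 f ∈ Atilde := by
  apply Submodule.mem_sup_right
  apply Submodule.subset_span
  rcases hf with h | h | h | h | h | h <;> subst h <;> simp

lemma curl_mono_mem (a b : ℕ) (hab : a + b ≤ 3) : curl2 (x ^ a * y ^ b) ∈ Atilde := by
  have ha : a ≤ 3 := by omega
  interval_cases a
  · have hb : b ≤ 3 := by omega
    interval_cases b
    · apply curl_low_mem <;> simp [x, y]
    · apply curl_low_mem <;> simp [x, y, pderiv_X_of_ne, totalDegree_X]
    · apply curl_low_mem <;> simp [x, y, pderiv_X_of_ne, totalDegree_X, pderiv_pow]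
        <;> exact le_trans (by rfl) (tdeg_two_mul_X 1)
    · rw [show x ^ 0 * y ^ 3 = y ^ 3 by ring]; exact curl_gen_mem _ (by simp)
  · have hb : b ≤ 2 := by omega
    interval_cases b
    · apply curl_low_mem <;> simp [x, y, pderiv_X_of_ne, totalDegree_X]
    · apply curl_low_mem <;> simp [x, y, pderiv_X_of_ne, totalDegree_X]
    · rw [show x ^ 1 * y ^ 2 = x * y ^ 2 by ring]; exact curl_gen_mem _ (by simp)
  · have hb : b ≤ 1 := by omega
    interval_cases b
    · apply curl_low_mem <;> simp [x, y, pderiv_X_of_ne, totalDegree_X, pderiv_pow]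
        <;> exact le_trans (by rfl) (tdeg_two_mul_X 0)
    · rw [show x ^ 2 * y ^ 1 = x ^ 2 * y by ring]; exact curl_gen_mem _ (by simp)
  · have hb : b = 0 := by omega
    subst hb
    rw [show x ^ 3 * y ^ 0 = x ^ 3 by ring]; exact curl_gen_mem _ (by simp)

/-- The curl of any polynomial of total degree at most three lies in `Atilde`. -/
lemma curl_deg3_mem (p : M2) (hp : p.totalDegree ≤ 3) : curl2 p ∈ Atilde := by
  rw [show curl2 p = curlL p from rfl, p.as_sum, map_sum]
  apply Submodule.sum_mem
  intro m hm
  rw [monomial_xy, mul_assoc, show (C (coeff m p) : M2) * (x ^ m 0 * y ^ m 1)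
      = coeff m p • (x ^ m 0 * y ^ m 1) from (smul_eq_C_mul _ _).symm, map_smul]
  apply Submodule.smul_mem
  rw [curlL_apply]
  apply curl_mono_mem
  have := le_totalDegree hm
  have hsum : (m.sum fun _ e => e) = m 0 + m 1 := support_sum_eq m
  omega

lemma tdeg3_helper (c : ℝ) (i j : ℕ) (hij : i + j ≤ 3) :
    (C c * x ^ i * y ^ j : M2).totalDegree ≤ 3 := by
  refine le_trans (totalDegree_mul _ _) (le_trans (add_le_add (totalDegree_mul _ _) le_rfl) ?_)
  simp only [totalDegree_C, x, y, totalDegree_X_pow]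
  omega

lemma mem_A0_of_deg3 (p : M2) (hp : p.totalDegree ≤ 3) : p ∈ A0 :=
  Submodule.mem_sup_left ((mem_restrictTotalDegree _ _ _).mpr hp)

/-- The generating cubics/quartics are all in `A0`. -/
lemma gens_subset_A0 :
    ({x ^ 3, y ^ 3, x ^ 2 * y, x * y ^ 2, x ^ 3 * y, x * y ^ 3} : Set M2) ⊆ A0 := by
  intro f hf
  rcases hf with h | h | h | h | h | h <;> subst h
  · exact mem_A0_of_deg3 _ (by rw [x, totalDegree_X_pow])
  · exact mem_A0_of_deg3 _ (by rw [y, totalDegree_X_pow])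
  · exact mem_A0_of_deg3 _ (le_trans (totalDegree_mul _ _)
      (by simp [x, y, totalDegree_X_pow, totalDegree_X]))
  · exact mem_A0_of_deg3 _ (le_trans (totalDegree_mul _ _)
      (by simp [x, y, totalDegree_X_pow, totalDegree_X]))
  · exact Submodule.mem_sup_right (Submodule.subset_span (by simp))
  · exact Submodule.mem_sup_right (Submodule.subset_span (by simp))

/-- Curls of `A0` potentials lie in `Atilde`. -/
lemma curl_A0_mem (φ : M2) (hφ : φ ∈ A0) : curl2 φ ∈ Atilde := by
  rw [show curl2 φ = curlL φ from rfl]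
  revert φ
  have : A0 ≤ Atilde.comap curlL := by
    rw [A0]
    apply sup_le
    · intro p hp
      exact curl_deg3_mem p ((mem_restrictTotalDegree _ _ _).mp hp)
    · rw [Submodule.span_le]
      rintro f (h | h)
      · subst h; exact curl_gen_mem _ (by simp)
      · rw [Set.mem_singleton_iff] at h; subst h; exact curl_gen_mem _ (by simp)
  exact fun φ hφ => this hφ

/-- A divergence-free field with affine components is the curl of a quadratic. -/
lemma divfree_P1_is_curl (w : Fin 2 → M2)
    (hw : ∀ i, (w i).totalDegree ≤ 1) (hdiv : div2 w = 0) :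
    ∃ φ : M2, φ.totalDegree ≤ 3 ∧ curl2 φ = w := by
  obtain ⟨a, b, c, hw0⟩ : ∃ a b c : ℝ, w 0 = C a + C b * x + C c * y :=
    ⟨_, _, _, deg1_decomp (w 0) (hw 0)⟩
  obtain ⟨d, e, f, hw1⟩ : ∃ d e f : ℝ, w 1 = C d + C e * x + C f * y :=
    ⟨_, _, _, deg1_decomp (w 1) (hw 1)⟩
  have hC2 : (2 : M2) = C 2 := (map_ofNat C 2).symm
  have hdiv' : (C (b + f) : M2) = 0 := by
    rw [div2, hw0, hw1] at hdiv
    simp only [map_add, pderiv_C, pderiv_C_mul, x, y, pderiv_X_self, pderiv_X_of_ne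
      (show (1 : Fin 2) ≠ 0 by decide), pderiv_X_of_ne (show (0 : Fin 2) ≠ 1 by decide),
      mul_one, mul_zero, add_zero, zero_add] at hdiv
    rw [map_add]
    linear_combination hdiv
  have hbf : f = -b := by
    have := MvPolynomial.C_injective (Fin 2) ℝ (hdiv'.trans (map_zero C).symm)
    linarith
  refine ⟨C d * x + C (e / 2) * x ^ 2 + C f * (x * y) - C a * y - C (c / 2) * y ^ 2,
    ?_, ?_⟩
  · refine le_trans (totalDegree_sub _ _) (max_le (le_trans (totalDegree_sub _ _)
      (max_le (le_trans (totalDegree_add _ _) (max_le (le_trans (totalDegree_add _ _)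
      (max_le ?_ ?_)) ?_)) ?_)) ?_)
    · simpa using tdeg3_helper d 1 0 (by norm_num)
    · simpa using tdeg3_helper (e / 2) 2 0 (by norm_num)
    · simpa [mul_assoc] using tdeg3_helper f 1 1 (by norm_num)
    · simpa using tdeg3_helper a 0 1 (by norm_num)
    · simpa using tdeg3_helper (c / 2) 0 2 (by norm_num)
  · funext i
    fin_cases i
    · show -(pderiv 1 _) = w 0
      rw [hw0, hbf]
      simp only [map_sub, map_add, pderiv_C_mul, pderiv_pow, pderiv_mul, x, y,
        pderiv_X_self, pderiv_X_of_ne (show (0 : Fin 2) ≠ 1 by decide), pderiv_C,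
        mul_one, mul_zero, zero_mul, add_zero, zero_add, sub_zero, map_neg, hC2,
        ← C_mul]
      ring_nf
      rw [mul_assoc (X 1 : M2), show (C (c * (1 / 2)) : M2) * 2 = C c by
        rw [hC2, ← C_mul, show c * (1 / 2) * 2 = c by ring]]
    · show pderiv 0 _ = w 1
      rw [hw1]
      simp only [map_sub, map_add, pderiv_C_mul, pderiv_pow, pderiv_mul, x, y,
        pderiv_X_self, pderiv_X_of_ne (show (1 : Fin 2) ≠ 0 by decide), pderiv_C,
        mul_one, mul_zero, zero_mul, add_zero, zero_add, sub_zero, hC2, ← C_mul]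
      ring_nf
      rw [show (C (e * (1 / 2)) : M2) * X 0 * 2 = X 0 * C e by
        rw [hC2, mul_right_comm, ← C_mul, show e * (1 / 2) * 2 = e by ring, mul_comm]]

/-- Divergence-free fields in the reduced Adini 1-form space are exactly the
curls of potentials in the Adini 0-form space. -/
theorem divfree_reduced_adini_eq_curls :
    {u : Fin 2 → M2 | u ∈ Atilde ∧ div2 u = 0} =
      {u : Fin 2 → M2 | ∃ φ ∈ A0, u = curl2 φ} := by
  ext u
  simp only [Set.mem_setOf_eq]
  constructor
  · rintro ⟨hu, hdiv⟩
    rw [Atilde] at hu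
    rw [Submodule.mem_sup] at hu
    obtain ⟨w, hw, t, ht, rfl⟩ := hu
    -- t is a curl of an element of the span of the six generators
    have himg : ({curl2 (x ^ 3), curl2 (y ^ 3), curl2 (x ^ 2 * y), curl2 (x * y ^ 2),
        curl2 (x ^ 3 * y), curl2 (x * y ^ 3)} : Set (Fin 2 → M2)) =
        curlL '' {x ^ 3, y ^ 3, x ^ 2 * y, x * y ^ 2, x ^ 3 * y, x * y ^ 3} := by
      simp only [Set.image_insert_eq, Set.image_singleton, curlL_apply]
    rw [himg, ← Submodule.map_span] at ht
    obtain ⟨ψ, hψ, hψt⟩ := ht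
    have hψA0 : ψ ∈ A0 := (Submodule.span_le.mpr gens_subset_A0) hψ
    have hdivt : div2 t = 0 := by rw [← hψt]; exact div2_curl2 ψ
    have hdivw : div2 w = 0 := by
      have : divL (w + t) = divL w + divL t := map_add _ _ _
      simp only [divL_apply] at this
      rw [this, hdivt, add_zero] at hdiv
      exact hdiv
    obtain ⟨φ, hφdeg, hφ⟩ := divfree_P1_is_curl w
      (fun i => (mem_restrictTotalDegree _ _ _).mp (hw i (Set.mem_univ i))) hdivw
    refine ⟨φ + ψ, A0.add_mem (mem_A0_of_deg3 φ hφdeg) hψA0, ?_⟩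
    have : curlL (φ + ψ) = curlL φ + curlL ψ := map_add _ _ _
    simp only [curlL_apply] at this
    rw [this, hφ, ← hψt]
    rfl
  · rintro ⟨φ, hφ, rfl⟩
    exact ⟨curl_A0_mem φ hφ, div2_curl2 φ⟩

end
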